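/- On ℝ⁸ with coordinates (x₁, x₂, α₁, α₂, p₁, p₂, η₁, η₂) and the standard symplectic Poisson bracket (where (x₁,p₁), (x₂,p₂), (α₁,η₁), (α₂,η₂) are conjugate pairs), the functions H = ½[(p₁ - η₁ sin α₁ - η₂ sin α₂)² + (p₂ + η₁ cos α₁ + η₂ cos α₂)²] and G = p₁(p₁ - η₁ sin α₁ - η₂ sin α₂) + p₂(p₂ + η₁ cos α₁ + η₂ cos α₂) + ½(η₁ + η₂)² Poisson commute: {H, G} = 0. -/
import Mathlib


open Real

/-- Partial derivative of `F : ℝ⁸ → ℝ` in the `i`-th coordinate direction. -/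
noncomputable def pd (i : Fin 8) (F : (Fin 8 → ℝ) → ℝ) (z : Fin 8 → ℝ) : ℝ :=
  fderiv ℝ F z (Pi.single i 1)

/-- Standard Poisson bracket on `ℝ⁸` with coordinates
`(x₁, x₂, α₁, α₂, p₁, p₂, η₁, η₂)` (indices `0,…,7`), where
`(x₁,p₁), (x₂,p₂), (α₁,η₁), (α₂,η₂)` are conjugate pairs. -/
noncomputable def poisson (F K : (Fin 8 → ℝ) → ℝ) (z : Fin 8 → ℝ) : ℝ :=
  (pd 0 F z * pd 4 K z - pd 4 F z * pd 0 K z) +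
  (pd 1 F z * pd 5 K z - pd 5 F z * pd 1 K z) +
  (pd 2 F z * pd 6 K z - pd 6 F z * pd 2 K z) +
  (pd 3 F z * pd 7 K z - pd 7 F z * pd 3 K z)

/-- The sub-Riemannian Hamiltonian `H` (equal lengths `ℓ₁ = ℓ₂ = 1`). -/
noncomputable def Hfun (z : Fin 8 → ℝ) : ℝ :=
  ((z 4 - z 6 * Real.sin (z 2) - z 7 * Real.sin (z 3)) ^ 2 +
   (z 5 + z 6 * Real.cos (z 2) + z 7 * Real.cos (z 3)) ^ 2) / 2

/-- The extra integral `G`. -/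
noncomputable def Gfun (z : Fin 8 → ℝ) : ℝ :=
  z 4 * (z 4 - z 6 * Real.sin (z 2) - z 7 * Real.sin (z 3)) +
  z 5 * (z 5 + z 6 * Real.cos (z 2) + z 7 * Real.cos (z 3)) +
  (z 6 + z 7) ^ 2 / 2

set_option maxRecDepth 10000 in
set_option maxHeartbeats 2000000 in
theorem stmt14 : ∀ z : Fin 8 → ℝ, poisson Hfun Gfun z = 0 := by
  intro z
  have hp : ∀ i : Fin 8, HasFDerivAt (fun z : Fin 8 → ℝ => z i)
      (ContinuousLinearMap.proj (R := ℝ) i) z := fun i => hasFDerivAt_apply i z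
  have hu : HasFDerivAt (fun z : Fin 8 → ℝ =>
      z 4 - z 6 * Real.sin (z 2) - z 7 * Real.sin (z 3)) _ z :=
    ((hp 4).sub ((hp 6).mul (hp 2).sin)).sub ((hp 7).mul (hp 3).sin)
  have hv : HasFDerivAt (fun z : Fin 8 → ℝ =>
      z 5 + z 6 * Real.cos (z 2) + z 7 * Real.cos (z 3)) _ z :=
    ((hp 5).add ((hp 6).mul (hp 2).cos)).add ((hp 7).mul (hp 3).cos)
  have hu2 := (hasDerivAt_pow 2 (z 4 - z 6 * Real.sin (z 2) - z 7 * Real.sin (z 3))).comp_hasFDerivAt z hu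
  have hv2 := (hasDerivAt_pow 2 (z 5 + z 6 * Real.cos (z 2) + z 7 * Real.cos (z 3))).comp_hasFDerivAt z hv
  have hw2 := (hasDerivAt_pow 2 (z 6 + z 7)).comp_hasFDerivAt z ((hp 6).add (hp 7))
  have hH : HasFDerivAt Hfun _ z := ((hu2.add hv2).mul_const (2:ℝ)⁻¹)
  have hG : HasFDerivAt Gfun _ z :=
    (((hp 4).mul hu).add ((hp 5).mul hv)).add (hw2.mul_const (2:ℝ)⁻¹)
  simp only [poisson, pd, hH.fderiv, hG.fderiv]
  simp (config := { maxSteps := 10000000 }) only [ContinuousLinearMap.add_apply, ContinuousLinearMap.sub_apply,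
    ContinuousLinearMap.coe_smul', Pi.smul_apply, ContinuousLinearMap.smul_apply,
    ContinuousLinearMap.proj_apply, Pi.single_apply, smul_eq_mul,
    Fin.reduceEq, reduceIte, mul_ite, ite_mul, mul_zero, zero_mul, mul_one, one_mul,
    add_zero, zero_add, sub_zero, pow_one]
  push_cast
  linear_combination
    (-(z 6) * ((z 4 - z 6 * Real.sin (z 2) - z 7 * Real.sin (z 3)) * z 5 -
      (z 5 + z 6 * Real.cos (z 2) + z 7 * Real.cos (z 3)) * z 4)) *
      (sin_sq_add_cos_sq (z 2)) +
    (-(z 7) * ((z 4 - z 6 * Real.sin (z 2) - z 7 * Real.sin (z 3)) * z 5 -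
      (z 5 + z 6 * Real.cos (z 2) + z 7 * Real.cos (z 3)) * z 4)) *
      (sin_sq_add_cos_sq (z 3))
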